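/- Let μ_k be a sequence of finite positive Borel measures on a compact metric space X, all with the same total mass V_k → V. Suppose for every m ∈ ℕ there exist a closed set S_m ⊂ X, measures ν_k^m with μ_k ≤ 𝟙_{S_m} μ_k + ν_k^m, limsup_k μ_k(S_m) ≤ 1/m, and ν_k^m ⇀ ν^m weakly as k → ∞ with ν^m ⇀ ν as m → ∞, where ν(X) = V. Then μ_k ⇀ ν weakly. -/

import Mathlib

open MeasureTheory Filter Topology

/-- abstract final step of the proof of weak convergence of Bergman
measures. If finite measures `μ_k` on a compact metric space, of total masses
`V_k → V`, satisfy: for every `m ≥ 1` there are a closed set `S m`, measures `ν_k^m`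
with `μ_k ≤ 𝟙_{S m} μ_k + ν_k^m`, `limsup_k μ_k (S m) ≤ 1/m`, `ν_k^m ⇀ ν^m` as `k → ∞`
and `ν^m ⇀ ν` as `m → ∞`, where `ν X = V`, then `μ_k ⇀ ν` weakly. -/
theorem weak_convergence_from_tail_estimates {X : Type*} [MetricSpace X] [CompactSpace X]
    [MeasurableSpace X] [BorelSpace X]
    (μ : ℕ → Measure X) [∀ k, IsFiniteMeasure (μ k)]
    (ν : Measure X) [IsFiniteMeasure ν] (V : ℝ) (Vk : ℕ → ℝ)
    (hVk : ∀ k, (μ k Set.univ).toReal = Vk k)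
    (hV : Tendsto Vk atTop (𝓝 V))
    (hνV : (ν Set.univ).toReal = V)
    (S : ℕ → Set X) (νkm : ℕ → ℕ → Measure X) [∀ m k, IsFiniteMeasure (νkm m k)]
    (νm : ℕ → Measure X) [∀ m, IsFiniteMeasure (νm m)]
    (hclosed : ∀ m, IsClosed (S m))
    (hdom : ∀ m k, μ k ≤ (μ k).restrict (S m) + νkm m k)
    (htail : ∀ m : ℕ, 1 ≤ m → limsup (fun k => (μ k (S m)).toReal) atTop ≤ 1 / (m : ℝ))
    (hweak_k : ∀ m, ∀ f : C(X, ℝ),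
      Tendsto (fun k => ∫ x, f x ∂(νkm m k)) atTop (𝓝 (∫ x, f x ∂(νm m))))
    (hweak_m : ∀ f : C(X, ℝ),
      Tendsto (fun m => ∫ x, f x ∂(νm m)) atTop (𝓝 (∫ x, f x ∂ν))) :
    ∀ f : C(X, ℝ), Tendsto (fun k => ∫ x, f x ∂(μ k)) atTop (𝓝 (∫ x, f x ∂ν)) := by
  -- every continuous function is integrable w.r.t. any finite measure
  have hint : ∀ (g : C(X, ℝ)) (ρ : Measure X) [IsFiniteMeasure ρ],
      Integrable (fun x => g x) ρ := by
    intro g ρ _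
    exact g.continuous.integrable_of_hasCompactSupport ((isClosed_tsupport _).isCompact)
  have hVb : IsBoundedUnder (· ≤ ·) atTop Vk := hV.isBoundedUnder_le
  have htV : ∀ (m k : ℕ), ((μ k) (S m)).toReal ≤ Vk k := fun m k => by
    rw [← hVk k]
    exact ENNReal.toReal_mono (measure_ne_top _ _) (measure_mono (Set.subset_univ _))
  have ht_bdd : ∀ m, IsBoundedUnder (· ≤ ·) atTop (fun k => ((μ k) (S m)).toReal) :=
    fun m => hVb.mono_le (Eventually.of_forall (htV m))
  have habs : ∀ (g : C(X, ℝ)) (ρ : Measure X) [IsFiniteMeasure ρ],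
      |∫ x, g x ∂ρ| ≤ ‖g‖ * (ρ Set.univ).toReal := by
    intro g ρ _
    rw [← Real.norm_eq_abs]
    exact norm_integral_le_of_norm_le_const
      (Eventually.of_forall fun x => g.norm_coe_le_norm x)
  -- the μ-integral sequences are bounded above and below
  have hVmul : ∀ c : ℝ, Tendsto (fun k => c * Vk k) atTop (𝓝 (c * V)) :=
    fun c => tendsto_const_nhds.mul hV
  have haBle : ∀ g : C(X, ℝ), IsBoundedUnder (· ≤ ·) atTop (fun k => ∫ x, g x ∂(μ k)) := by
    intro g
    refine (hVmul ‖g‖).isBoundedUnder_le.mono_le (Eventually.of_forall fun k => ?_)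
    have := habs g (μ k)
    rw [hVk k] at this
    exact (le_abs_self _).trans this
  have haBge : ∀ g : C(X, ℝ), IsBoundedUnder (· ≥ ·) atTop (fun k => ∫ x, g x ∂(μ k)) := by
    intro g
    refine (hVmul (-‖g‖)).isBoundedUnder_ge.mono_ge (Eventually.of_forall fun k => ?_)
    have := habs g (μ k)
    rw [hVk k] at this
    simpa [neg_mul] using neg_le_of_abs_le this
  -- key upper bound for nonnegative continuous functions
  have key : ∀ g : C(X, ℝ), (∀ x, 0 ≤ g x) →
      limsup (fun k => ∫ x, g x ∂(μ k)) atTop ≤ ∫ x, g x ∂ν := by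
    intro g hg
    have hRHS : Tendsto (fun m : ℕ => ‖g‖ * (1 / (m : ℝ)) + ∫ x, g x ∂(νm m)) atTop
        (𝓝 (‖g‖ * 0 + ∫ x, g x ∂ν)) :=
      (tendsto_const_nhds.mul tendsto_one_div_atTop_nhds_zero_nat).add (hweak_m g)
    rw [mul_zero, zero_add] at hRHS
    refine ge_of_tendsto hRHS ?_
    filter_upwards [eventually_ge_atTop 1] with m hm
    have step : ∀ k, ∫ x, g x ∂(μ k) ≤
        ‖g‖ * ((μ k) (S m)).toReal + ∫ x, g x ∂(νkm m k) := by
      intro k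
      have h1 : ∫ x, g x ∂(μ k) ≤ ∫ x, g x ∂((μ k).restrict (S m) + νkm m k) :=
        integral_mono_measure (hdom m k) (Eventually.of_forall hg) (hint g _)
      rw [integral_add_measure (hint g _) (hint g _)] at h1
      refine h1.trans (add_le_add_left ?_ _)
      have h2 := habs g ((μ k).restrict (S m))
      rw [Measure.restrict_apply_univ] at h2
      exact (le_abs_self _).trans h2
    have hb : Tendsto (fun k => ∫ x, g x ∂(νkm m k)) atTop (𝓝 (∫ x, g x ∂(νm m))) :=
      hweak_k m g
    have hgb : IsBoundedUnder (· ≤ ·) atTop (fun k => ‖g‖ * ((μ k) (S m)).toReal) := by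
      obtain ⟨b, hbb⟩ := ht_bdd m
      rw [eventually_map] at hbb
      exact ⟨‖g‖ * b, eventually_map.2 (hbb.mono fun k hk =>
        mul_le_mul_of_nonneg_left hk (norm_nonneg g))⟩
    have hgb' : IsBoundedUnder (· ≥ ·) atTop (fun k => ‖g‖ * ((μ k) (S m)).toReal) :=
      ⟨0, eventually_map.2 (Eventually.of_forall fun k =>
        mul_nonneg (norm_nonneg g) ENNReal.toReal_nonneg)⟩
    have hsum_b : IsBoundedUnder (· ≤ ·) atTop
        ((fun k => ‖g‖ * ((μ k) (S m)).toReal) + fun k => ∫ x, g x ∂(νkm m k)) :=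
      isBoundedUnder_le_add hgb hb.isBoundedUnder_le
    calc limsup (fun k => ∫ x, g x ∂(μ k)) atTop
        ≤ limsup ((fun k => ‖g‖ * ((μ k) (S m)).toReal) +
            fun k => ∫ x, g x ∂(νkm m k)) atTop :=
          limsup_le_limsup (Eventually.of_forall step)
            ((haBge g).isCoboundedUnder_le) hsum_b
      _ ≤ limsup (fun k => ‖g‖ * ((μ k) (S m)).toReal) atTop +
            limsup (fun k => ∫ x, g x ∂(νkm m k)) atTop :=
          limsup_add_le hgb' hgb hb.isCoboundedUnder_le hb.isBoundedUnder_le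
      _ ≤ ‖g‖ * (1 / (m : ℝ)) + ∫ x, g x ∂(νm m) := by
          refine add_le_add ?_ (le_of_eq hb.limsup_eq)
          have hmul : limsup ((fun _ : ℕ => ‖g‖) * fun k => ((μ k) (S m)).toReal) atTop ≤
              limsup (fun _ : ℕ => ‖g‖) atTop * limsup (fun k => ((μ k) (S m)).toReal) atTop :=
            limsup_mul_le (Eventually.of_forall fun _ => norm_nonneg g).frequently
              isBoundedUnder_const
              (Eventually.of_forall fun k => ENNReal.toReal_nonneg) (ht_bdd m)
          rw [limsup_const] at hmul
          exact hmul.trans (mul_le_mul_of_nonneg_left (htail m hm) (norm_nonneg g))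
  intro f
  -- nonnegative shifts of f
  set c : ℝ := ‖f‖ with hc
  have hfle : ∀ x, |f x| ≤ c := fun x => f.norm_coe_le_norm x
  have hI1 : ∀ (ρ : Measure X) [IsFiniteMeasure ρ],
      ∫ x, (ContinuousMap.const X c + f) x ∂ρ = c * (ρ Set.univ).toReal + ∫ x, f x ∂ρ := by
    intro ρ _
    simp only [ContinuousMap.add_apply, ContinuousMap.const_apply]
    rw [integral_add (integrable_const c) (hint f ρ), integral_const, smul_eq_mul, mul_comm]
    rfl
  have hI2 : ∀ (ρ : Measure X) [IsFiniteMeasure ρ],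
      ∫ x, (ContinuousMap.const X c - f) x ∂ρ = c * (ρ Set.univ).toReal - ∫ x, f x ∂ρ := by
    intro ρ _
    simp only [ContinuousMap.sub_apply, ContinuousMap.const_apply]
    rw [integral_sub (integrable_const c) (hint f ρ), integral_const, smul_eq_mul, mul_comm]
    rfl
  -- upper bound: limsup ∫ f dμ_k ≤ ∫ f dν
  have hsup : limsup (fun k => ∫ x, f x ∂(μ k)) atTop ≤ ∫ x, f x ∂ν := by
    have hkey := key (ContinuousMap.const X c + f)
      (fun x => by have := (abs_le.1 (hfle x)).1; simpa using by linarith)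
    rw [hI1 ν, hνV] at hkey
    have heq : (fun k => ∫ x, (ContinuousMap.const X c + f) x ∂(μ k)) =
        (fun k => ∫ x, f x ∂(μ k)) + fun k => c * Vk k := by
      funext k; rw [hI1 (μ k), hVk k, add_comm]; rfl
    rw [heq] at hkey
    have hadd : limsup (fun k => ∫ x, f x ∂(μ k)) atTop +
        liminf (fun k => c * Vk k) atTop ≤
        limsup ((fun k => ∫ x, f x ∂(μ k)) + fun k => c * Vk k) atTop :=
      le_limsup_add (haBle f) ((haBge f).isCoboundedUnder_le)
        (hVmul c).isBoundedUnder_le (hVmul c).isBoundedUnder_ge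
    rw [(hVmul c).liminf_eq] at hadd
    have := hadd.trans hkey
    linarith
  -- lower bound: ∫ f dν ≤ liminf ∫ f dμ_k
  have hinf : ∫ x, f x ∂ν ≤ liminf (fun k => ∫ x, f x ∂(μ k)) atTop := by
    have hkey := key (ContinuousMap.const X c - f)
      (fun x => by have := (abs_le.1 (hfle x)).2; simpa using by linarith)
    rw [hI2 ν, hνV] at hkey
    have heq : (fun k => ∫ x, (ContinuousMap.const X c - f) x ∂(μ k)) =
        fun k => c * Vk k - ∫ x, f x ∂(μ k) := by
      funext k; rw [hI2 (μ k), hVk k]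
    rw [heq] at hkey
    have hdb : IsBoundedUnder (· ≤ ·) atTop
        (fun k => c * Vk k - ∫ x, f x ∂(μ k)) := by
      refine (hVmul (2 * c)).isBoundedUnder_le.mono_le (Eventually.of_forall fun k => ?_)
      have h1 := habs f (μ k)
      rw [hVk k, ← hc] at h1
      have := neg_le_of_abs_le h1
      simp only [two_mul, add_mul]
      linarith
    rw [le_liminf_iff ((haBle f).isCoboundedUnder_ge) (haBge f)]
    intro y hy
    set I := ∫ x, f x ∂ν
    have hε : (0 : ℝ) < (I - y) / 2 := by linarith
    have h1 : ∀ᶠ k in atTop, c * Vk k - ∫ x, f x ∂(μ k) < c * V - I + (I - y) / 2 :=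
      eventually_lt_of_limsup_lt (by linarith) hdb
    have h2 : ∀ᶠ k in atTop, c * V - (I - y) / 2 < c * Vk k :=
      (hVmul c).eventually (eventually_gt_nhds (by linarith))
    filter_upwards [h1, h2] with k hk1 hk2
    linarith
  exact tendsto_of_le_liminf_of_limsup_le hinf hsup (haBle f) (haBge f)
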